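/- Let |T| be a positive selfadjoint (possibly unbounded) operator with 0 in its resolvent set, J a conjugation commuting with the spectral measure of |T|, and C a conjugation. Then the operator T = C J |T| with domain D(|T|) is C-selfadjoint: T = C T* C. -/
import Mathlib


open scoped ComplexConjugate

local notation "⟪" x ", " y "⟫" => @inner ℂ _ _ x y

/-- If `|T|` is a positive selfadjoint operator with bounded inverse, `J` a conjugation
commuting with `|T|` (and with its inverse, i.e. with its spectral calculus), and `C` a
conjugation, then `T = C J |T|` (with domain `D(|T|)`) is `C`-selfadjoint: `T* = C T C`.
The adjoint is expressed through its defining property: `T* y = g` iff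
`⟪T x, y⟫ = ⟪x, g⟫` for all `x ∈ D(T)`. -/
theorem CJabsT_is_C_selfadjoint {H : Type*} [NormedAddCommGroup H]
    [InnerProductSpace ℂ H] [CompleteSpace H]
    (C J : H → H)
    (hCadd : ∀ f g, C (f + g) = C f + C g)
    (hCsmul : ∀ (c : ℂ) (f : H), C (c • f) = conj c • C f)
    (hCinv : ∀ f, C (C f) = f)
    (hCinner : ∀ f g, ⟪C f, C g⟫ = ⟪g, f⟫)
    (hJadd : ∀ f g, J (f + g) = J f + J g)
    (hJsmul : ∀ (c : ℂ) (f : H), J (c • f) = conj c • J f)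
    (hJinv : ∀ f, J (J f) = f)
    (hJinner : ∀ f g, ⟪J f, J g⟫ = ⟪g, f⟫)
    (A : H →ₗ.[ℂ] H)
    (hdense : Dense (A.domain : Set H))
    (hAsa : A.adjoint = A)
    (hApos : ∀ x : A.domain, 0 ≤ (⟪(x : H), A x⟫).re)
    (R : H →L[ℂ] H)
    (hRA : ∀ x : A.domain, R (A x) = x)
    (hAR : ∀ y : H, ∃ h : R y ∈ A.domain, A ⟨R y, h⟩ = y)
    (hJdom : ∀ x, x ∈ A.domain ↔ J x ∈ A.domain)
    (hJA : ∀ (x : A.domain) (h : J (x : H) ∈ A.domain), J (A x) = A ⟨J (x : H), h⟩)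
    (hJR : ∀ y, J (R y) = R (J y)) :
    ∀ y g : H,
      (∀ x : A.domain, ⟪C (J (A x)), y⟫ = ⟪(x : H), g⟫) ↔
      (∃ h : C y ∈ A.domain, g = J (A ⟨C y, h⟩)) := by
  -- symmetry of A
  have hsymm : ∀ x z : A.domain, ⟪A x, (z : H)⟫ = ⟪(x : H), A z⟫ := by
    have h := A.adjoint_isFormalAdjoint hdense
    rw [hAsa] at h
    exact h
  -- R is selfadjoint
  have hRsa : ∀ a b : H, ⟪R a, b⟫ = ⟪a, R b⟫ := by
    intro a b
    obtain ⟨ha, hAa⟩ := hAR a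
    obtain ⟨hb, hAb⟩ := hAR b
    have h := hsymm ⟨R a, ha⟩ ⟨R b, hb⟩
    rw [hAa, hAb] at h
    exact h.symm
  intro y g
  constructor
  · intro hy
    have key : ∀ x : A.domain, ⟪J (C y), A x⟫ = ⟪g, (x : H)⟫ := by
      intro x
      have h1 := hCinner (J (A x)) (C y); rw [hCinv] at h1
      have h2 := hJinner (C y) (J (A x)); rw [hJinv] at h2
      calc ⟪J (C y), A x⟫ = ⟪J (A x), C y⟫ := h2
        _ = conj ⟪C y, J (A x)⟫ := (inner_conj_symm _ _).symm
        _ = conj ⟪C (J (A x)), y⟫ := by rw [h1]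
        _ = conj ⟪(x : H), g⟫ := by rw [hy x]
        _ = ⟪g, (x : H)⟫ := inner_conj_symm _ _
    have hu : J (C y) = R g := by
      apply ext_inner_right ℂ
      intro w
      obtain ⟨hw, hAw⟩ := hAR w
      have hk := key ⟨R w, hw⟩
      rw [hAw] at hk
      calc ⟪J (C y), w⟫ = ⟪g, R w⟫ := hk
        _ = conj ⟪R w, g⟫ := (inner_conj_symm _ _).symm
        _ = conj ⟪w, R g⟫ := by rw [hRsa]
        _ = ⟪R g, w⟫ := inner_conj_symm _ _
    have hmem : J (C y) ∈ A.domain := by rw [hu]; exact (hAR g).1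
    have hmem' : C y ∈ A.domain := (hJdom (C y)).mpr hmem
    refine ⟨hmem', ?_⟩
    have hJJ : J ((⟨C y, hmem'⟩ : A.domain) : H) ∈ A.domain := hmem
    have hA' := hJA ⟨C y, hmem'⟩ hJJ
    have hg : A (⟨J ((⟨C y, hmem'⟩ : A.domain) : H), hJJ⟩ : A.domain) = g := by
      obtain ⟨h', hAg⟩ := hAR g
      have he : (⟨J ((⟨C y, hmem'⟩ : A.domain) : H), hJJ⟩ : A.domain) = ⟨R g, h'⟩ :=
        Subtype.ext hu
      rw [he, hAg]
    rw [← hg, ← hA']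
  · rintro ⟨h, rfl⟩
    intro x
    have hJCy : J ((⟨C y, h⟩ : A.domain) : H) ∈ A.domain := (hJdom (C y)).mp h
    have h1 := hCinner (J (A x)) (C y); rw [hCinv] at h1
    have h2 := hJinner ((⟨C y, h⟩ : A.domain) : H) (J (A x)); rw [hJinv] at h2
    calc ⟪C (J (A x)), y⟫ = ⟪C y, J (A x)⟫ := h1
      _ = conj ⟪J (A x), C y⟫ := (inner_conj_symm _ _).symm
      _ = conj ⟪J ((⟨C y, h⟩ : A.domain) : H), A x⟫ := by rw [← h2]
      _ = conj ⟪(A (⟨J ((⟨C y, h⟩ : A.domain) : H), hJCy⟩ : A.domain) : H), (x : H)⟫ := by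
          rw [hsymm ⟨J ((⟨C y, h⟩ : A.domain) : H), hJCy⟩ x]
      _ = conj ⟪J (A ⟨C y, h⟩), (x : H)⟫ := by rw [← hJA ⟨C y, h⟩ hJCy]
      _ = ⟪(x : H), J (A ⟨C y, h⟩)⟫ := inner_conj_symm _ _
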